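/- arXiv:2201.10151 — 3 statements merged into one kernel-verified Lean document; each statement's English description precedes it below -/
import Mathlib

section
/- For every nonzero finite nonnegative measure μ on D, the exponential convergence parameter satisfies θ_S(μ) ≥ sup{θ ≥ 0 : μ{x ∈ D : θ_S(x) ≥ θ} > 0}. -/
open MeasureTheory ProbabilityTheory Filter ENNReal

variable {α : Type*} [MeasurableSpace α]

/-- `μ S_n 𝟙_D`: the mass of the measure `μ` pushed through `n` steps of the
sub-Markovian semigroup `S`. -/
noncomputable def kmass (S : ℕ → Kernel α α) (n : ℕ) (μ : Measure α) : ℝ≥0∞ :=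
  Measure.bind μ (fun x => S n x) Set.univ

/-- Exponential convergence parameter `θ_S(μ)`. -/
noncomputable def expParam (S : ℕ → Kernel α α) (μ : Measure α) : ℝ≥0∞ :=
  sInf {θ : ℝ≥0∞ | Filter.liminf (fun n : ℕ => θ⁻¹ ^ n * kmass S n μ) Filter.atTop = 0}

/-- `θ_{0,S} = sup_{x ∈ D} θ_S(δ_x)`. -/
noncomputable def theta0 (S : ℕ → Kernel α α) : ℝ≥0∞ :=
  ⨆ x : α, expParam S (Measure.dirac x)

/-- Polynomial convergence parameter `j_S(μ)` (with the convention `inf ∅ = 0`). -/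
noncomputable def polyParam (S : ℕ → Kernel α α) (μ : Measure α) : ℝ :=
  sInf {l : ℝ | 0 ≤ l ∧
    Filter.liminf (fun n : ℕ => (n : ℝ≥0∞) ^ (-l) * (theta0 S)⁻¹ ^ n * kmass S n μ)
      Filter.atTop = 0}

/-- `j_S(x) := j_S(δ_x)`. -/
noncomputable def jfun (S : ℕ → Kernel α α) (x : α) : ℝ :=
  polyParam S (Measure.dirac x)

/-- `(S_n)` is a sub-Markovian semigroup. -/
def IsSubMarkovSemigroup (S : ℕ → Kernel α α) : Prop :=
  S 0 = Kernel.id ∧ (∀ n m, S (n + m) = (S m) ∘ₖ (S n)) ∧ ∀ n x, (S n) x Set.univ ≤ 1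

/-- For every nonzero finite nonnegative measure `μ` on `D`, the exponential
convergence parameter satisfies `θ_S(μ) ≥ sup {θ ≥ 0 : μ {x : θ_S(x) ≥ θ} > 0}`. -/
theorem expParam_ge_sSup (S : ℕ → Kernel α α) (hS : IsSubMarkovSemigroup S)
    (μ : Measure α) [IsFiniteMeasure μ] (hμ : μ ≠ 0) :
    sSup {θ : ℝ≥0∞ | 0 < μ {x | θ ≤ expParam S (Measure.dirac x)}} ≤ expParam S μ := by
  apply sSup_le
  intro θ hθ
  simp only [Set.mem_setOf_eq] at hθ
  rw [expParam]
  apply le_sInf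
  intro θ' hθ'
  simp only [Set.mem_setOf_eq] at hθ'
  have hmeas : ∀ n : ℕ, Measurable fun x => (S n) x Set.univ :=
    fun n => Kernel.measurable_coe _ MeasurableSet.univ
  have hk : ∀ n : ℕ, kmass S n μ = ∫⁻ x, (S n) x Set.univ ∂μ := by
    intro n
    rw [kmass, Measure.bind_apply MeasurableSet.univ (S n).measurable.aemeasurable]
  have hint : Filter.liminf (fun n : ℕ => ∫⁻ x, θ'⁻¹ ^ n * (S n) x Set.univ ∂μ) atTop = 0 := by
    have heq : ∀ n : ℕ, ∫⁻ x, θ'⁻¹ ^ n * (S n) x Set.univ ∂μ = θ'⁻¹ ^ n * kmass S n μ := by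
      intro n; rw [hk, lintegral_const_mul _ (hmeas n)]
    simpa only [heq] using hθ'
  have hfatou : ∫⁻ x, Filter.liminf (fun n : ℕ => θ'⁻¹ ^ n * (S n) x Set.univ) atTop ∂μ = 0 := by
    refine le_antisymm ?_ zero_le
    calc ∫⁻ x, Filter.liminf (fun n : ℕ => θ'⁻¹ ^ n * (S n) x Set.univ) atTop ∂μ
        ≤ Filter.liminf (fun n : ℕ => ∫⁻ x, θ'⁻¹ ^ n * (S n) x Set.univ ∂μ) atTop :=
          lintegral_liminf_le (fun n => (hmeas n).const_mul _)
      _ = 0 := hint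
  have hae : ∀ᵐ x ∂μ,
      Filter.liminf (fun n : ℕ => θ'⁻¹ ^ n * (S n) x Set.univ) atTop = 0 := by
    have := (lintegral_eq_zero_iff
      (Measurable.liminf fun n => (hmeas n).const_mul _)).mp hfatou
    filter_upwards [this] with x hx using hx
  have hae2 : ∀ᵐ x ∂μ, expParam S (Measure.dirac x) ≤ θ' := by
    filter_upwards [hae] with x hx
    apply sInf_le
    simp only [Set.mem_setOf_eq]
    have hd : ∀ n : ℕ, kmass S n (Measure.dirac x) = (S n) x Set.univ := by
      intro n
      rw [kmass, Measure.dirac_bind (S n).measurable]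
    simpa only [hd] using hx
  by_contra h
  push_neg at h
  have hnull : μ {x | ¬ expParam S (Measure.dirac x) ≤ θ'} = 0 := hae2
  have : μ {x | θ ≤ expParam S (Measure.dirac x)} = 0 := by
    refine measure_mono_null ?_ hnull
    intro x hx
    simp only [Set.mem_setOf_eq] at hx ⊢
    exact fun hle => absurd (le_trans hx hle) (not_le.mpr h)
  exact absurd this hθ.ne'
end

section
/- Under Assumption (A), for every nonzero measure μ ∈ M₊(W_S) one has j_S(μS_1) = j_S(μ); consequently, for every x ∈ D, the sequence (j_S(X_n))_{n≥0} is ℙ_x-almost surely non-increasing (with the convention j_S(∂) := 0). -/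
open MeasureTheory ProbabilityTheory Filter ENNReal

variable {α : Type*} [MeasurableSpace α]

/-- **Assumption (A)** of Champagnat–Villemonais, for the sub-Markovian semigroup `S`,
with weight function `W`, probability measures `ν i`, functions `η i` (`i` in the finite or
countable index set `I`) and rate sequence `a`. -/
structure AssumptionA (S : ℕ → Kernel α α) {I : Type} (W : α → ℝ)
    (ν : I → Measure α) (η : I → α → ℝ) (a : ℕ → ℝ) : Prop where
  countable : Countable I
  theta0_pos : 0 < theta0 S
  theta0_le_one : theta0 S ≤ 1
  j_nat : ∀ x : α, ∃ k : ℕ, jfun S x = (k : ℝ)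
  W_meas : Measurable W
  one_le_W : ∀ x, 1 ≤ W x
  nu_prob : ∀ i, IsProbabilityMeasure (ν i)
  nu_W : ∀ i, ∫⁻ x, ENNReal.ofReal (W x) ∂(ν i) ≠ ∞
  eta_meas : ∀ i, Measurable (η i)
  eta_nonneg : ∀ i x, 0 ≤ η i x
  eta_ne_zero : ∀ i, η i ≠ 0
  eta_bdd : ∀ i, ∃ C : ℝ, ∀ x, η i x ≤ C * W x
  summable_etanu : ∀ x, Summable (fun i => η i x * (∫⁻ y, ENNReal.ofReal (W y) ∂(ν i)).toReal)
  etanu_bdd : ∃ C : ℝ, ∀ x,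
    (∑' i, η i x * (∫⁻ y, ENNReal.ofReal (W y) ∂(ν i)).toReal) ≤ C * W x
  SW_fin : ∀ n x, ∫⁻ y, ENNReal.ofReal (W y) ∂(S n x) ≠ ∞
  a_nonneg : ∀ n, 0 ≤ a n
  a_tendsto : Tendsto a atTop (nhds 0)
  approx : ∀ f : α → ℝ, Measurable f → ∀ c : ℝ, 0 ≤ c → (∀ x, |f x| ≤ c * W x) →
    ∀ n : ℕ, 1 ≤ n → ∀ x : α,
      |((theta0 S).toReal)⁻¹ ^ n * (n : ℝ) ^ (-(jfun S x)) * (∫ y, f y ∂(S n x)) -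
        ∑' i, η i x * ∫ y, f y ∂(ν i)| ≤ a n * W x * c

/-- `ν` is a quasi-stationary distribution for `S`. -/
def IsQSD (S : ℕ → Kernel α α) (ν : Measure α) : Prop :=
  IsProbabilityMeasure ν ∧ ∀ n, kmass S n ν ≠ 0 ∧
    Measure.bind ν (fun x => S n x) = kmass S n ν • ν

/-! ### Auxiliary material for the proof -/

/-- The defining set of `polyParam`. -/
def CVpset (S : ℕ → Kernel α α) (μ : Measure α) : Set ℝ :=
  {l : ℝ | 0 ≤ l ∧
    Filter.liminf (fun n : ℕ => (n : ℝ≥0∞) ^ (-l) * (theta0 S)⁻¹ ^ n * kmass S n μ)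
      Filter.atTop = 0}

lemma CVpolyParam_eq (S : ℕ → Kernel α α) (μ : Measure α) :
    polyParam S μ = sInf (CVpset S μ) := rfl

lemma CVjfun_eq (S : ℕ → Kernel α α) (y : α) :
    jfun S y = sInf (CVpset S (Measure.dirac y)) := rfl

lemma kmass_eq_lintegral (S : ℕ → Kernel α α) (n : ℕ) (μ : Measure α) :
    kmass S n μ = ∫⁻ x, S n x Set.univ ∂μ :=
  Measure.bind_apply MeasurableSet.univ (S n).measurable.aemeasurable

lemma kmass_dirac (S : ℕ → Kernel α α) (n : ℕ) (z : α) :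
    kmass S n (Measure.dirac z) = S n z Set.univ := by
  rw [kmass_eq_lintegral]
  exact lintegral_dirac' z ((S n).measurable_coe MeasurableSet.univ)

lemma CVkmass_bind {S : ℕ → Kernel α α} (hS : IsSubMarkovSemigroup S) (μ : Measure α) (n : ℕ) :
    kmass S n (Measure.bind μ (fun x => S 1 x)) = kmass S (n + 1) μ := by
  unfold kmass
  rw [Measure.bind_bind (S 1).measurable.aemeasurable (S n).measurable.aemeasurable]
  have hc : ∀ x : α, ((S 1) x).bind (fun y => S n y) = S (n + 1) x := by
    intro x
    rw [Nat.add_comm n 1, hS.2.1 1 n, Kernel.comp_apply]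
  simp_rw [hc]

lemma liminf_zero_of_le_const_mul {u v : ℕ → ℝ≥0∞} {K : ℝ≥0∞} (hK : K ≠ ∞)
    (h : ∀ᶠ n in atTop, u n ≤ K * v n) (hv : liminf v atTop = 0) :
    liminf u atTop = 0 := by
  have h1 : liminf u atTop ≤ liminf (fun n => K * v n) atTop :=
    liminf_le_liminf h
  have h2 : liminf ((fun _ : ℕ => K) * v) atTop ≤ K * liminf v atTop := by
    refine le_trans (ENNReal.liminf_mul_le ?_ ?_) ?_
    · exact Or.inr (by rw [hv]; simp)
    · exact Or.inl (by simpa using hK)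
    · simp
  rw [hv, mul_zero] at h2
  exact le_antisymm (le_trans h1 h2) zero_le

lemma CVaux_anti {l : ℝ} (hl : 0 ≤ l) (n : ℕ) :
    ((n + 1 : ℕ) : ℝ≥0∞) ^ (-l) ≤ (n : ℝ≥0∞) ^ (-l) := by
  rw [ENNReal.rpow_neg, ENNReal.rpow_neg]
  exact ENNReal.inv_le_inv.2 (ENNReal.rpow_le_rpow (by exact_mod_cast Nat.le_succ n) hl)

lemma CVaux_two {l : ℝ} (hl : 0 ≤ l) (n : ℕ) (hn : 1 ≤ n) :
    (n : ℝ≥0∞) ^ (-l) ≤ 2 ^ l * ((n + 1 : ℕ) : ℝ≥0∞) ^ (-l) := by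
  have htop : (2:ℝ≥0∞) ^ l ≠ ∞ := ENNReal.rpow_ne_top_of_nonneg hl (by norm_num)
  have hne : (2:ℝ≥0∞) ^ l ≠ 0 := (ENNReal.rpow_pos (by norm_num) (by norm_num)).ne'
  have h2 : ((n + 1 : ℕ) : ℝ≥0∞) ^ l ≤ 2 ^ l * (n : ℝ≥0∞) ^ l := by
    rw [← ENNReal.mul_rpow_of_nonneg _ _ hl]
    refine ENNReal.rpow_le_rpow ?_ hl
    push_cast
    rw [two_mul]
    gcongr
    exact_mod_cast hn
  rw [ENNReal.rpow_neg, ENNReal.rpow_neg]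
  calc ((n : ℝ≥0∞) ^ l)⁻¹ = 2 ^ l * ((2:ℝ≥0∞) ^ l * (n : ℝ≥0∞) ^ l)⁻¹ := by
        rw [ENNReal.mul_inv (Or.inl hne) (Or.inl htop), ← mul_assoc,
          ENNReal.mul_inv_cancel hne htop, one_mul]
    _ ≤ 2 ^ l * (((n + 1 : ℕ) : ℝ≥0∞) ^ l)⁻¹ :=
        mul_le_mul_right (ENNReal.inv_le_inv.2 h2) _

lemma CVpset_bind_iff {S : ℕ → Kernel α α} (hS : IsSubMarkovSemigroup S)
    (hpos : 0 < theta0 S) (hone : theta0 S ≤ 1) (μ : Measure α) (l : ℝ) :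
    l ∈ CVpset S (Measure.bind μ (fun x => S 1 x)) ↔ l ∈ CVpset S μ := by
  unfold CVpset
  simp only [Set.mem_setOf_eq, CVkmass_bind hS]
  refine and_congr_right fun hl => ?_
  set t := (theta0 S)⁻¹ with ht
  have htne : t ≠ ∞ := ENNReal.inv_ne_top.2 hpos.ne'
  have htone : (1:ℝ≥0∞) ≤ t := ENNReal.one_le_inv.2 hone
  constructor
  · -- from liminf of (n ↦ n^(-l) t^n c(n+1)) = 0 to liminf of c
    intro h
    rw [← Filter.liminf_nat_add _ 1]
    refine liminf_zero_of_le_const_mul (K := t) htne ?_ h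
    filter_upwards [eventually_ge_atTop 1] with n hn
    calc ((n + 1 : ℕ) : ℝ≥0∞) ^ (-l) * t ^ (n + 1) * kmass S (n + 1) μ
        ≤ (n : ℝ≥0∞) ^ (-l) * (t * t ^ n) * kmass S (n + 1) μ := by
          rw [pow_succ, mul_comm (t ^ n) t]
          exact mul_le_mul_left (mul_le_mul_left (CVaux_anti hl n) _) _
      _ = t * ((n : ℝ≥0∞) ^ (-l) * t ^ n * kmass S (n + 1) μ) := by ring
  · -- converse
    intro h
    have h' : liminf (fun n : ℕ =>
        ((n + 1 : ℕ) : ℝ≥0∞) ^ (-l) * t ^ (n + 1) * kmass S (n + 1) μ) atTop = 0 := by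
      rw [Filter.liminf_nat_add
        (fun m : ℕ => (m : ℝ≥0∞) ^ (-l) * t ^ m * kmass S m μ) 1] at *
      exact h
    refine liminf_zero_of_le_const_mul (K := (2:ℝ≥0∞) ^ l)
      (ENNReal.rpow_ne_top_of_nonneg hl (by norm_num)) ?_ h'
    filter_upwards [eventually_ge_atTop 1] with n hn
    calc (n : ℝ≥0∞) ^ (-l) * t ^ n * kmass S (n + 1) μ
        ≤ (2 ^ l * ((n + 1 : ℕ) : ℝ≥0∞) ^ (-l)) * t ^ (n + 1) * kmass S (n + 1) μ := by
          refine mul_le_mul_left ?_ _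
          exact mul_le_mul' (CVaux_two hl n hn) (pow_le_pow_right₀ htone (Nat.le_succ n))
      _ = 2 ^ l * (((n + 1 : ℕ) : ℝ≥0∞) ^ (-l) * t ^ (n + 1) * kmass S (n + 1) μ) := by ring

lemma CVpolyParam_bind {S : ℕ → Kernel α α} (hS : IsSubMarkovSemigroup S)
    (hpos : 0 < theta0 S) (hone : theta0 S ≤ 1) (μ : Measure α) :
    polyParam S (Measure.bind μ (fun x => S 1 x)) = polyParam S μ := by
  rw [CVpolyParam_eq, CVpolyParam_eq]
  congr 1
  ext l
  exact CVpset_bind_iff hS hpos hone μ l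

lemma CVpset_up {S : ℕ → Kernel α α} {μ : Measure α} {l l' : ℝ}
    (h : l ∈ CVpset S μ) (hle : l ≤ l') : l' ∈ CVpset S μ := by
  refine ⟨h.1.trans hle, le_antisymm ?_ zero_le⟩
  rw [← h.2]
  refine liminf_le_liminf ?_
  filter_upwards [eventually_ge_atTop 1] with n hn
  refine mul_le_mul_left (mul_le_mul_left ?_ _) _
  exact ENNReal.rpow_le_rpow_of_exponent_le (by exact_mod_cast hn) (by linarith)

lemma CVnot_mem_pset {S : ℕ → Kernel α α} {z : α} {l : ℝ} (hl : l < jfun S z) :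
    l ∉ CVpset S (Measure.dirac z) := by
  intro h
  have : jfun S z ≤ l := by
    rw [CVjfun_eq]
    exact csInf_le ⟨0, fun x hx => hx.1⟩ h
  linarith


-- the analytic lemma, with assumptions spelled out
lemma CVsucc_mem (S : ℕ → Kernel α α) (W : α → ℝ) (aa : ℕ → ℝ) (θ : ℝ≥0∞)
    (hpos : 0 < θ) (hone : θ ≤ 1)
    (W_meas : Measurable W) (one_le_W : ∀ x, 1 ≤ W x)
    (SW_fin : ∀ n x, ∫⁻ y, ENNReal.ofReal (W y) ∂(S n x) ≠ ∞)
    (a_tendsto : Tendsto aa atTop (nhds 0))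
    (j : ℝ) (hj : 0 ≤ j) (z : α) (T : ℝ)
    (happrox : ∀ n : ℕ, 1 ≤ n →
      |(θ.toReal)⁻¹ ^ n * (n : ℝ) ^ (-j) * (∫ y, W y ∂(S n z)) - T| ≤ aa n * W z * 1) :
    Filter.liminf (fun n : ℕ => (n : ℝ≥0∞) ^ (-(j + 1)) * θ⁻¹ ^ n * kmass S n (Measure.dirac z))
      Filter.atTop = 0 := by
  set θt := θ.toReal with hθt
  have hθtop : θ ≠ ∞ := (lt_of_le_of_lt hone (by norm_num)).ne
  have hθtpos : 0 < θt := ENNReal.toReal_pos hpos.ne' hθtop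
  set B := |T| + W z with hB
  have hWz : 1 ≤ W z := one_le_W z
  have hWnn : ∀ x, 0 ≤ W x := fun x => le_trans zero_le_one (one_le_W x)
  -- real-variable bound
  have key : ∀ n : ℕ, 1 ≤ n → aa n ≤ 1 →
      θt⁻¹ ^ n * ∫ y, W y ∂(S n z) ≤ B * (n : ℝ) ^ j := by
    intro n hn han
    have h1 := happrox n hn
    have hnpos : (0:ℝ) < (n:ℝ) := by exact_mod_cast hn
    have hrpow : (0:ℝ) < (n:ℝ) ^ j := Real.rpow_pos_of_pos hnpos _
    have hintnn : 0 ≤ ∫ y, W y ∂(S n z) := integral_nonneg hWnn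
    have hrw : θt⁻¹ ^ n * (n:ℝ) ^ (-j) * (∫ y, W y ∂(S n z)) ≤ B := by
      have h2 := le_abs_self
        (θt⁻¹ ^ n * (n:ℝ) ^ (-j) * (∫ y, W y ∂(S n z)) - T)
      have h3 : aa n * W z ≤ W z := mul_le_of_le_one_left (by linarith) han
      have h4 := le_abs_self T
      rw [hB]
      have h5 := abs_nonneg T
      nlinarith [h1, h2, h3, h4, h5, le_abs_self T, neg_abs_le T]
    have h6 : (θt⁻¹ ^ n * ∫ y, W y ∂(S n z)) / (n:ℝ) ^ j ≤ B := by
      rw [Real.rpow_neg hnpos.le] at hrw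
      calc (θt⁻¹ ^ n * ∫ y, W y ∂(S n z)) / (n:ℝ) ^ j
          = θt⁻¹ ^ n * ((n:ℝ) ^ j)⁻¹ * (∫ y, W y ∂(S n z)) := by ring
        _ ≤ B := hrw
    exact (div_le_iff₀ hrpow).mp h6
  -- ENNReal side
  have hSle : ∀ n : ℕ, (S n z) Set.univ ≤ ENNReal.ofReal (∫ y, W y ∂(S n z)) := by
    intro n
    have hint : Integrable W (S n z) := by
      refine ⟨W_meas.aestronglyMeasurable, ?_⟩
      rw [hasFiniteIntegral_iff_ofReal (ae_of_all _ hWnn)]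
      exact (SW_fin n z).lt_top
    rw [MeasureTheory.ofReal_integral_eq_lintegral_ofReal hint (ae_of_all _ hWnn)]
    calc (S n z) Set.univ = ∫⁻ _, 1 ∂(S n z) := lintegral_one.symm
      _ ≤ ∫⁻ y, ENNReal.ofReal (W y) ∂(S n z) :=
        lintegral_mono fun y => ENNReal.one_le_ofReal.2 (one_le_W y)
  have hθinv : θ⁻¹ = ENNReal.ofReal θt⁻¹ := by
    rw [ENNReal.ofReal_inv_of_pos hθtpos, ENNReal.ofReal_toReal hθtop]
  have hbnd : ∀ᶠ n : ℕ in atTop,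
      (n : ℝ≥0∞) ^ (-(j + 1)) * θ⁻¹ ^ n * kmass S n (Measure.dirac z) ≤
        (n : ℝ≥0∞) ^ (-(1:ℝ)) * ENNReal.ofReal B := by
    filter_upwards [eventually_ge_atTop 1, a_tendsto.eventually_lt_const (by norm_num : (0:ℝ) < 1)]
      with n hn han
    have hnpos : (0:ℝ) < (n:ℝ) := by exact_mod_cast hn
    have hn0 : (n : ℝ≥0∞) ≠ 0 := by exact_mod_cast hnpos.ne'
    calc (n : ℝ≥0∞) ^ (-(j + 1)) * θ⁻¹ ^ n * kmass S n (Measure.dirac z)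
        = (n : ℝ≥0∞) ^ (-(j + 1)) * (θ⁻¹ ^ n * (S n z Set.univ)) := by
          rw [kmass_dirac, mul_assoc]
      _ ≤ (n : ℝ≥0∞) ^ (-(j + 1)) * ENNReal.ofReal ((n : ℝ) ^ j * B) := by
          refine mul_le_mul_right ?_ _
          calc θ⁻¹ ^ n * (S n z Set.univ)
              ≤ θ⁻¹ ^ n * ENNReal.ofReal (∫ y, W y ∂(S n z)) :=
                mul_le_mul_right (hSle n) _
            _ = ENNReal.ofReal (θt⁻¹ ^ n * ∫ y, W y ∂(S n z)) := by
                rw [hθinv, ← ENNReal.ofReal_pow (by positivity),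
                  ← ENNReal.ofReal_mul (by positivity)]
            _ ≤ ENNReal.ofReal ((n : ℝ) ^ j * B) := by
                refine ENNReal.ofReal_le_ofReal ?_
                have := key n hn han.le
                linarith
      _ = (n : ℝ≥0∞) ^ (-(j + 1)) * ((n : ℝ≥0∞) ^ j * ENNReal.ofReal B) := by
          rw [ENNReal.ofReal_mul (by positivity), (ENNReal.ofReal_rpow_of_pos hnpos).symm,
            ENNReal.ofReal_natCast]
      _ = (n : ℝ≥0∞) ^ (-(1:ℝ)) * ENNReal.ofReal B := by
          rw [← mul_assoc, ← ENNReal.rpow_add _ _ hn0 (ENNReal.natCast_ne_top n)]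
          norm_num
  have htend : Tendsto (fun n : ℕ => (n : ℝ≥0∞) ^ (-(1:ℝ)) * ENNReal.ofReal B)
      atTop (nhds 0) := by
    simp only [ENNReal.rpow_neg_one]
    simpa using ENNReal.Tendsto.mul_const ENNReal.tendsto_inv_nat_nhds_zero
      (Or.inr ENNReal.ofReal_ne_top)
  have hzero : Tendsto (fun n : ℕ =>
      (n : ℝ≥0∞) ^ (-(j + 1)) * θ⁻¹ ^ n * kmass S n (Measure.dirac z)) atTop (nhds 0) :=
    tendsto_of_tendsto_of_tendsto_of_le_of_le' tendsto_const_nhds htend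
      (Eventually.of_forall fun n => zero_le) hbnd
  exact hzero.liminf_eq

lemma CVsucc_mem' {S : ℕ → Kernel α α} {I : Type} {W : α → ℝ}
    {ν : I → Measure α} {η : I → α → ℝ} {a : ℕ → ℝ}
    (hA : AssumptionA S W ν η a) (z : α) :
    (jfun S z + 1) ∈ CVpset S (Measure.dirac z) := by
  obtain ⟨k, hk⟩ := hA.j_nat z
  have hj0 : 0 ≤ jfun S z := by rw [hk]; positivity
  refine ⟨by linarith, ?_⟩
  refine CVsucc_mem S W a (theta0 S) hA.theta0_pos hA.theta0_le_one hA.W_meas hA.one_le_W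
    hA.SW_fin hA.a_tendsto (jfun S z) hj0 z (∑' i, η i z * ∫ y, W y ∂(ν i)) ?_
  intro n hn
  exact hA.approx W hA.W_meas 1 zero_le_one
    (fun x => by rw [abs_of_nonneg (by linarith [hA.one_le_W x]), one_mul]) n hn z

lemma CVjump {S : ℕ → Kernel α α} (hS : IsSubMarkovSemigroup S) {I : Type} {W : α → ℝ}
    {ν : I → Measure α} {η : I → α → ℝ} {a : ℕ → ℝ}
    (hA : AssumptionA S W ν η a) (y : α) :
    (S 1) y {z | jfun S y < jfun S z} = 0 := by
  obtain ⟨ky, hky⟩ := hA.j_nat y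
  set l₀ : ℝ := jfun S y + 2⁻¹ with hl₀
  have hJ0 : 0 ≤ jfun S y := by rw [hky]; positivity
  have hl₀nn : 0 ≤ l₀ := by rw [hl₀]; linarith
  set h : α → ℝ≥0∞ := fun z =>
    liminf (fun n : ℕ => (n : ℝ≥0∞) ^ (-l₀) * (theta0 S)⁻¹ ^ n * (S n z Set.univ))
      atTop with hh
  have hmeas : Measurable h :=
    Measurable.liminf (fun n => ((S n).measurable_coe MeasurableSet.univ).const_mul _)
  set A' := {z | h z ≠ 0} with hA'
  have hA'meas : MeasurableSet A' := by
    have : A' = h ⁻¹' ({0}ᶜ) := rfl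
    rw [this]
    exact hmeas (measurableSet_singleton 0).compl
  have hpset_iff : ∀ (z : α) (l : ℝ), l ∈ CVpset S (Measure.dirac z) ↔
      (0 ≤ l ∧ liminf (fun n : ℕ =>
        (n : ℝ≥0∞) ^ (-l) * (theta0 S)⁻¹ ^ n * (S n z Set.univ)) atTop = 0) := by
    intro z l
    unfold CVpset
    simp only [Set.mem_setOf_eq, kmass_dirac]
  have hsub : {z | jfun S y < jfun S z} ⊆ A' := by
    intro z hz
    obtain ⟨kz, hkz⟩ := hA.j_nat z
    have hlt : l₀ < jfun S z := by
      have h1 : (ky : ℝ) < kz := by rw [← hky, ← hkz]; exact hz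
      have h2 : ky < kz := by exact_mod_cast h1
      have h3 : (ky : ℝ) + 1 ≤ kz := by exact_mod_cast h2
      rw [hkz, hl₀, hky]
      linarith
    have hnm := CVnot_mem_pset hlt
    rw [hpset_iff] at hnm
    intro h0
    exact hnm ⟨hl₀nn, h0⟩
  refine measure_mono_null hsub ?_
  by_contra hpos0
  have hposA : 0 < (S 1) y A' := pos_iff_ne_zero.2 hpos0
  set μ' := ((S 1) y).restrict A' with hμ'
  have hclaim1 : l₀ ∉ CVpset S μ' := by
    rintro ⟨-, hlim⟩
    have heq : ∀ n : ℕ, (n : ℝ≥0∞) ^ (-l₀) * (theta0 S)⁻¹ ^ n * kmass S n μ' =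
        ∫⁻ z, (n : ℝ≥0∞) ^ (-l₀) * (theta0 S)⁻¹ ^ n * (S n z Set.univ) ∂μ' := by
      intro n
      rw [kmass_eq_lintegral, ← lintegral_const_mul _
        ((S n).measurable_coe MeasurableSet.univ)]
    have hle : ∫⁻ z, h z ∂μ' ≤
        liminf (fun n : ℕ => (n : ℝ≥0∞) ^ (-l₀) * (theta0 S)⁻¹ ^ n * kmass S n μ') atTop := by
      simp only [heq]
      exact lintegral_liminf_le
        (fun n => ((S n).measurable_coe MeasurableSet.univ).const_mul _)
    rw [hlim] at hle
    have hposint : 0 < ∫⁻ z, h z ∂μ' := by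
      rw [lintegral_pos_iff_support hmeas]
      have hsupp : Function.support h = A' := rfl
      rw [hsupp, hμ', Measure.restrict_apply hA'meas, Set.inter_self]
      exact hposA
    exact absurd (le_antisymm hle zero_le) hposint.ne'
  have hbindy : Measure.bind (Measure.dirac y) (fun x => S 1 x) = (S 1) y :=
    Measure.dirac_bind (S 1).measurable y
  have hclaim2 : CVpset S (Measure.dirac y) ⊆ CVpset S μ' := by
    intro l hl
    have hl1 : l ∈ CVpset S (Measure.bind (Measure.dirac y) (fun x => S 1 x)) :=
      (CVpset_bind_iff hS hA.theta0_pos hA.theta0_le_one _ l).2 hl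
    rw [hbindy] at hl1
    refine ⟨hl1.1, le_antisymm ?_ zero_le⟩
    rw [← hl1.2]
    refine liminf_le_liminf (Eventually.of_forall fun n => ?_)
    refine mul_le_mul_right ?_ _
    rw [kmass_eq_lintegral, kmass_eq_lintegral]
    exact lintegral_mono' Measure.restrict_le_self le_rfl
  have hne : (CVpset S (Measure.dirac y)).Nonempty := ⟨jfun S y + 1, CVsucc_mem' hA y⟩
  have hlb : l₀ ≤ sInf (CVpset S (Measure.dirac y)) := by
    refine le_csInf hne fun b hb => ?_
    by_contra hbl
    push_neg at hbl
    exact hclaim1 (CVpset_up (hclaim2 hb) hbl.le)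
  rw [← CVjfun_eq] at hlb
  rw [hl₀] at hlb
  linarith

/-- Under Assumption (A), `j_S(μ S_1) = j_S(μ)` for every nonzero
`μ ∈ M₊(W_S)`; consequently, for every `x ∈ D`, the sequence `(j_S(X_n))_{n ≥ 0}` is
`ℙ_x`-almost surely non-increasing (with the convention `j_S(∂) = 0`), i.e. for every `n`,
the probability, starting from `x`, that the polynomial parameter strictly increases between
times `n` and `n+1` vanishes. -/
theorem polyParam_bind_eq_and_ae_nonincreasing
    (S : ℕ → Kernel α α) (hS : IsSubMarkovSemigroup S)
    {I : Type} {W : α → ℝ} {ν : I → Measure α} {η : I → α → ℝ} {a : ℕ → ℝ}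
    (hA : AssumptionA S W ν η a) :
    (∀ μ : Measure α, μ ≠ 0 → (∫⁻ x, ENNReal.ofReal (W x) ∂μ) ≠ ∞ →
      polyParam S (Measure.bind μ (fun x => S 1 x)) = polyParam S μ) ∧
    (∀ x : α, ∀ n : ℕ,
      ∫⁻ y, (S 1 y) {z | jfun S y < jfun S z}
        ∂(Measure.bind (Measure.dirac x) (fun x' => S n x')) = 0) := by
  constructor
  · intro μ _ _
    exact CVpolyParam_bind hS hA.theta0_pos hA.theta0_le_one μ
  · intro x n
    have h0 : ∀ y : α, (S 1) y {z | jfun S y < jfun S z} = 0 := fun y => CVjump hS hA y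
    calc ∫⁻ y, (S 1 y) {z | jfun S y < jfun S z}
          ∂(Measure.bind (Measure.dirac x) (fun x' => S n x'))
        = ∫⁻ _, 0 ∂(Measure.bind (Measure.dirac x) (fun x' => S n x')) := by
          congr 1
          funext y
          exact h0 y
      _ = 0 := lintegral_zero
end

section
/- If ν is a quasi-stationary distribution with absorption parameter θ_{0,S}, then j_S(ν) = 0 and ν{x : j_S(x) > 0} = 0. If in addition Assumption (A) holds and ν ∈ M₊(W_S), then ν(η_S) = 1 and ν = Σ_{i∈I_S} ν(η_{S,i}) ν_{S,i}. -/
open MeasureTheory ProbabilityTheory Filter ENNReal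

variable {α : Type*} [MeasurableSpace α]

private lemma aux_rpow_top {l : ℝ} (hl : 0 < l) :
    Tendsto (fun n : ℕ => (n : ℝ≥0∞) ^ l) atTop (nhds ∞) :=
  (ENNReal.tendsto_rpow_at_top hl).comp ENNReal.tendsto_nat_nhds_top

private lemma aux_rpow_zero {l : ℝ} (hl : 0 < l) :
    Tendsto (fun n : ℕ => (n : ℝ≥0∞) ^ (-l)) atTop (nhds 0) := by
  have h := ENNReal.tendsto_inv_iff.2 (aux_rpow_top hl)
  simpa [ENNReal.rpow_neg] using h

private lemma polyParam_le {S : ℕ → Kernel α α} {μ : Measure α} {l : ℝ} (h0 : 0 ≤ l)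
    (h : Filter.liminf
      (fun n : ℕ => (n : ℝ≥0∞) ^ (-l) * (theta0 S)⁻¹ ^ n * kmass S n μ) Filter.atTop = 0) :
    polyParam S μ ≤ l :=
  csInf_le ⟨0, fun _ hm => hm.1⟩ ⟨h0, h⟩

private lemma polyParam_nonneg (S : ℕ → Kernel α α) (μ : Measure α) : 0 ≤ polyParam S μ :=
  Real.sInf_nonneg fun _ hl => hl.1

/-- If `ν` is a quasi-stationary distribution with absorption parameter
`θ_{0,S}`, then `j_S(ν) = 0` and `ν{x : j_S(x) > 0} = 0`.  If in addition Assumption (A)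
holds and `ν ∈ M₊(W_S)`, then `ν(η_S) = 1` and `ν = Σ_{i ∈ I_S} ν(η_{S,i}) ν_{S,i}`. -/
theorem qsd_with_param_theta0_structure
    (S : ℕ → Kernel α α) (hS : IsSubMarkovSemigroup S)
    (νq : Measure α) (hq : IsQSD S νq)
    (habs : ∀ n : ℕ, kmass S n νq = theta0 S ^ n) :
    (polyParam S νq = 0 ∧ νq {x | 0 < jfun S x} = 0) ∧
    (∀ {I : Type} {W : α → ℝ} {ν : I → Measure α} {η : I → α → ℝ} {a : ℕ → ℝ},
      AssumptionA S W ν η a → (∫⁻ x, ENNReal.ofReal (W x) ∂νq) ≠ ∞ →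
      (∫ x, (∑' i, η i x) ∂νq = 1 ∧
        νq = Measure.sum (fun i => ENNReal.ofReal (∫ x, η i x ∂νq) • ν i))) := by
  obtain ⟨hprob, hqsd⟩ := hq
  haveI := hprob
  have hSfin : ∀ n, IsFiniteKernel (S n) :=
    fun n => ⟨⟨1, ENNReal.one_lt_top, fun x => hS.2.2 n x⟩⟩
  -- θ ≠ 0
  have hθ0 : theta0 S ≠ 0 := by
    intro h
    have h1 := (hqsd 1).1
    rw [habs 1, h, pow_one] at h1
    exact h1 rfl
  -- θ ≤ 1
  have hθle1 : theta0 S ≤ 1 := by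
    have hbound1 : kmass S 1 νq ≤ 1 := by
      rw [kmass, Measure.bind_apply MeasurableSet.univ (Kernel.measurable _).aemeasurable]
      calc ∫⁻ x, S 1 x Set.univ ∂νq ≤ ∫⁻ _, 1 ∂νq := lintegral_mono fun x => hS.2.2 1 x
        _ = 1 := by simp
    rwa [habs 1, pow_one] at hbound1
  have hθtop : theta0 S ≠ ∞ := ne_top_of_le_ne_top ENNReal.one_ne_top hθle1
  have hcancel : ∀ n : ℕ, (theta0 S)⁻¹ ^ n * theta0 S ^ n = 1 := fun n => by
    rw [← mul_pow, ENNReal.inv_mul_cancel hθ0 hθtop, one_pow]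
  -- Part 1a
  have hpoly : polyParam S νq = 0 := by
    have hle : ∀ l : ℝ, 0 < l → polyParam S νq ≤ l := by
      intro l hl
      refine polyParam_le hl.le ?_
      have heq : (fun n : ℕ => (n : ℝ≥0∞) ^ (-l) * (theta0 S)⁻¹ ^ n * kmass S n νq)
          = fun n : ℕ => (n : ℝ≥0∞) ^ (-l) := by
        funext n; rw [habs n, mul_assoc, hcancel n, mul_one]
      rw [heq]
      exact (aux_rpow_zero hl).liminf_eq
    have h0 : 0 ≤ polyParam S νq := polyParam_nonneg S νq
    by_contra hne
    have hpos : 0 < polyParam S νq := lt_of_le_of_ne h0 (Ne.symm hne)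
    have := hle (polyParam S νq / 2) (by linarith)
    linarith
  -- Part 1b
  have hjnull : νq {x | 0 < jfun S x} = 0 := by
    have hFmeas : Measurable
        (fun x => liminf (fun n : ℕ => (theta0 S)⁻¹ ^ n * S n x Set.univ) atTop) :=
      Measurable.liminf fun n => ((S n).measurable_coe MeasurableSet.univ).const_mul _
    have hone : ∀ n : ℕ, ∫⁻ x, (theta0 S)⁻¹ ^ n * S n x Set.univ ∂νq = 1 := by
      intro n
      rw [lintegral_const_mul _ ((S n).measurable_coe MeasurableSet.univ),
        ← Measure.bind_apply MeasurableSet.univ (Kernel.measurable _).aemeasurable, ← kmass, habs n,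
        hcancel n]
    have hFint : ∫⁻ x, liminf (fun n : ℕ => (theta0 S)⁻¹ ^ n * S n x Set.univ) atTop ∂νq ≤ 1 := by
      refine le_trans
        (lintegral_liminf_le fun n => ((S n).measurable_coe MeasurableSet.univ).const_mul _) ?_
      simp only [hone]
      exact le_of_eq (liminf_const 1)
    have hae := ae_lt_top hFmeas (ne_top_of_le_ne_top ENNReal.one_ne_top hFint)
    rw [ae_iff] at hae
    refine measure_mono_null ?_ hae
    intro x hx
    simp only [Set.mem_setOf_eq, not_lt, top_le_iff, lt_top_iff_ne_top, not_not] at *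
    -- show the liminf is ∞
    set l : ℝ := jfun S x / 2 with hldef
    have hlpos : 0 < l := half_pos hx
    have hllt : l < jfun S x := half_lt_self hx
    have hne : liminf
        (fun n : ℕ => (n : ℝ≥0∞) ^ (-l) * (theta0 S)⁻¹ ^ n * kmass S n (Measure.dirac x))
        atTop ≠ 0 := by
      intro h
      exact absurd (polyParam_le hlpos.le h) (not_le.mpr hllt)
    have hkd : ∀ n, kmass S n (Measure.dirac x) = S n x Set.univ := fun n => by
      rw [kmass, Measure.dirac_bind (Kernel.measurable _)]
    obtain ⟨b, hb0, hbc⟩ := exists_between (pos_iff_ne_zero.mpr hne)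
    have hev : ∀ᶠ n : ℕ in atTop,
        b < (n : ℝ≥0∞) ^ (-l) * (theta0 S)⁻¹ ^ n * kmass S n (Measure.dirac x) :=
      eventually_lt_of_lt_liminf hbc
    have hev2 : ∀ᶠ n : ℕ in atTop,
        (n : ℝ≥0∞) ^ l * b ≤ (theta0 S)⁻¹ ^ n * S n x Set.univ := by
      filter_upwards [hev, eventually_ge_atTop 1] with n hn hn1
      have hn0 : (n : ℝ≥0∞) ≠ 0 := by
        simp only [ne_eq, Nat.cast_eq_zero]
        omega
      have hntop : (n : ℝ≥0∞) ≠ ∞ := ENNReal.natCast_ne_top n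
      calc (n : ℝ≥0∞) ^ l * b
          ≤ (n : ℝ≥0∞) ^ l *
            ((n : ℝ≥0∞) ^ (-l) * (theta0 S)⁻¹ ^ n * kmass S n (Measure.dirac x)) :=
            mul_le_mul_right hn.le _
        _ = (theta0 S)⁻¹ ^ n * S n x Set.univ := by
            rw [hkd n, ← mul_assoc, ← mul_assoc, ← ENNReal.rpow_add _ _ hn0 hntop]
            simp
    have htend : Tendsto (fun n : ℕ => (n : ℝ≥0∞) ^ l * b) atTop (nhds ∞) := by
      have := ENNReal.Tendsto.mul_const (b := b) (aux_rpow_top hlpos) (Or.inl ENNReal.top_ne_zero)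
      simpa [ENNReal.top_mul hb0.ne'] using this
    have : (∞ : ℝ≥0∞) ≤ liminf (fun n : ℕ => (theta0 S)⁻¹ ^ n * S n x Set.univ) atTop := by
      calc (∞ : ℝ≥0∞) = liminf (fun n : ℕ => (n : ℝ≥0∞) ^ l * b) atTop := htend.liminf_eq.symm
        _ ≤ _ := liminf_le_liminf hev2
    exact top_le_iff.mp this
  refine ⟨⟨hpoly, hjnull⟩, ?_⟩
  -- Part 2
  intro I W ν η a hA hνW
  haveI : Countable I := hA.countable
  have hW0 : ∀ x, 0 ≤ W x := fun x => le_trans zero_le_one (hA.one_le_W x)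
  have hθR : 0 < (theta0 S).toReal := ENNReal.toReal_pos hθ0 hθtop
  have hjae : ∀ᵐ x ∂νq, jfun S x = 0 := by
    rw [ae_iff]
    refine measure_mono_null ?_ hjnull
    intro x hx
    simp only [Set.mem_setOf_eq] at *
    exact lt_of_le_of_ne (polyParam_nonneg S _) (Ne.symm hx)
  have hαne : Nonempty α := by
    by_contra h
    rw [not_nonempty_iff] at h
    have h1 := hprob.measure_univ
    rw [Set.univ_eq_empty_iff.mpr h] at h1
    simp at h1
  obtain ⟨C, hC⟩ := hA.etanu_bdd
  set Wi : I → ℝ := fun i => (∫⁻ y, ENNReal.ofReal (W y) ∂ν i).toReal with hWidef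
  have hWi1 : ∀ i, 1 ≤ Wi i := by
    intro i
    haveI := hA.nu_prob i
    have h1 : (1 : ℝ≥0∞) ≤ ∫⁻ y, ENNReal.ofReal (W y) ∂ν i := by
      calc (1 : ℝ≥0∞) = ∫⁻ _, 1 ∂ν i := by simp
        _ ≤ _ := lintegral_mono fun y => by
              simpa using ENNReal.ofReal_le_ofReal (hA.one_le_W y)
    calc (1 : ℝ) = (1 : ℝ≥0∞).toReal := by simp
      _ ≤ Wi i := ENNReal.toReal_mono (hA.nu_W i) h1
  have hηWle : ∀ i x, η i x ≤ η i x * Wi i := fun i x =>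
    le_mul_of_one_le_right (hA.eta_nonneg i x) (hWi1 i)
  have hηWnonneg : ∀ x i, 0 ≤ η i x * Wi i := fun x i =>
    mul_nonneg (hA.eta_nonneg i x) (le_trans zero_le_one (hWi1 i))
  have hηC : ∀ i x, η i x ≤ C * W x := fun i x =>
    le_trans (hηWle i x)
      (le_trans (Summable.le_tsum (hA.summable_etanu x) i fun j _ => hηWnonneg x j) (hC x))
  have hC0 : 0 ≤ C := by
    obtain ⟨x⟩ := hαne
    have h1 : (0 : ℝ) ≤ C * W x :=
      le_trans (tsum_nonneg (hηWnonneg x)) (hC x)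
    nlinarith [hA.one_le_W x]
  have hWint : Integrable W νq := by
    have h := integrable_toReal_of_lintegral_ne_top hA.W_meas.ennreal_ofReal.aemeasurable hνW
    exact h.congr (ae_of_all _ fun x => ENNReal.toReal_ofReal (hW0 x))
  -- the key identity for nonnegative dominated f
  have key : ∀ f : α → ℝ, Measurable f → (∀ x, 0 ≤ f x) → ∀ c : ℝ, 0 ≤ c →
      (∀ x, f x ≤ c * W x) →
      ∫ x, f x ∂νq = ∫ x, (∑' i, η i x * ∫ y, f y ∂ν i) ∂νq := by
    intro f hf hf0 c hc hfW
    have habsf : ∀ x, |f x| ≤ c * W x := fun x => by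
      rw [abs_of_nonneg (hf0 x)]; exact hfW x
    set d : I → ℝ := fun i => ∫ y, f y ∂ν i with hd
    have hd0 : ∀ i, 0 ≤ d i := fun i => integral_nonneg hf0
    have hdle : ∀ i, d i ≤ c * Wi i := by
      intro i
      have h1 : d i = (∫⁻ y, ENNReal.ofReal (f y) ∂ν i).toReal :=
        integral_eq_lintegral_of_nonneg_ae (ae_of_all _ hf0) hf.aestronglyMeasurable
      have h2 : ∫⁻ y, ENNReal.ofReal (f y) ∂ν i
          ≤ ENNReal.ofReal c * ∫⁻ y, ENNReal.ofReal (W y) ∂ν i := by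
        rw [← lintegral_const_mul _ hA.W_meas.ennreal_ofReal]
        refine lintegral_mono fun y => ?_
        rw [← ENNReal.ofReal_mul hc]
        exact ENNReal.ofReal_le_ofReal (hfW y)
      rw [h1]
      calc (∫⁻ y, ENNReal.ofReal (f y) ∂ν i).toReal
          ≤ (ENNReal.ofReal c * ∫⁻ y, ENNReal.ofReal (W y) ∂ν i).toReal :=
            ENNReal.toReal_mono (ENNReal.mul_ne_top ENNReal.ofReal_ne_top (hA.nu_W i)) h2
        _ = c * Wi i := by rw [ENNReal.toReal_mul, ENNReal.toReal_ofReal hc]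
    have hsumd : ∀ x, Summable fun i => η i x * d i := by
      intro x
      refine Summable.of_nonneg_of_le (fun i => mul_nonneg (hA.eta_nonneg i x) (hd0 i))
        (fun i => ?_) ((hA.summable_etanu x).mul_left c)
      calc η i x * d i ≤ η i x * (c * Wi i) :=
            mul_le_mul_of_nonneg_left (hdle i) (hA.eta_nonneg i x)
        _ = c * (η i x * Wi i) := by ring
    set g : α → ℝ := fun x => ∑' i, η i x * d i with hg
    have hg0 : ∀ x, 0 ≤ g x := fun x =>
      tsum_nonneg fun i => mul_nonneg (hA.eta_nonneg i x) (hd0 i)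
    have hgle : ∀ x, g x ≤ c * C * W x := by
      intro x
      calc g x ≤ ∑' i, c * (η i x * Wi i) := by
            refine Summable.tsum_le_tsum (fun i => ?_) (hsumd x) ((hA.summable_etanu x).mul_left c)
            calc η i x * d i ≤ η i x * (c * Wi i) :=
                  mul_le_mul_of_nonneg_left (hdle i) (hA.eta_nonneg i x)
              _ = c * (η i x * Wi i) := by ring
        _ = c * ∑' i, η i x * Wi i := tsum_mul_left
        _ ≤ c * (C * W x) := mul_le_mul_of_nonneg_left (hC x) hc
        _ = c * C * W x := by ring
    have hgmeas : Measurable g := by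
      have hE : Measurable fun x => ∑' i, ENNReal.ofReal (η i x * d i) :=
        Measurable.ennreal_tsum fun i => ((hA.eta_meas i).mul_const (d i)).ennreal_ofReal
      have hge : g = fun x => (∑' i, ENNReal.ofReal (η i x * d i)).toReal := by
        funext x
        rw [← ENNReal.ofReal_tsum_of_nonneg
          (fun i => mul_nonneg (hA.eta_nonneg i x) (hd0 i)) (hsumd x),
          ENNReal.toReal_ofReal (hg0 x)]
      rw [hge]
      exact hE.ennreal_toReal
    have hgint : Integrable g νq := by
      refine Integrable.mono' (hWint.const_mul (c * C)) hgmeas.aestronglyMeasurable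
        (ae_of_all _ fun x => ?_)
      rw [Real.norm_eq_abs, abs_of_nonneg (hg0 x)]
      exact hgle x
    have hLf : ∫ x, f x ∂νq = (∫⁻ x, ENNReal.ofReal (f x) ∂νq).toReal :=
      integral_eq_lintegral_of_nonneg_ae (ae_of_all _ hf0) hf.aestronglyMeasurable
    have hLfin : ∫⁻ x, ENNReal.ofReal (f x) ∂νq ≠ ∞ := by
      have hle : ∫⁻ x, ENNReal.ofReal (f x) ∂νq
          ≤ ENNReal.ofReal c * ∫⁻ x, ENNReal.ofReal (W x) ∂νq := by
        rw [← lintegral_const_mul _ hA.W_meas.ennreal_ofReal]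
        refine lintegral_mono fun y => ?_
        rw [← ENNReal.ofReal_mul hc]
        exact ENNReal.ofReal_le_ofReal (hfW y)
      exact ne_top_of_le_ne_top (ENNReal.mul_ne_top ENNReal.ofReal_ne_top hνW) hle
    have hstep : ∀ n : ℕ, 1 ≤ n →
        |∫ x, f x ∂νq - ∫ x, g x ∂νq| ≤ a n * ((∫ x, W x ∂νq) * c) := by
      intro n hn
      haveI := hSfin n
      set A : α → ℝ≥0∞ := fun x => ∫⁻ y, ENNReal.ofReal (f y) ∂S n x with hAdef
      have hAmeas : Measurable A :=
        Measurable.lintegral_kernel_prod_right' (κ := S n)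
          (f := fun p : α × α => ENNReal.ofReal (f p.2)) (hf.comp measurable_snd).ennreal_ofReal
      have hAeq : ∫⁻ x, A x ∂νq = theta0 S ^ n * ∫⁻ x, ENNReal.ofReal (f x) ∂νq := by
        rw [hAdef, ← Measure.lintegral_bind (Kernel.measurable _).aemeasurable hf.ennreal_ofReal.aemeasurable,
          (hqsd n).2, habs n, lintegral_smul_measure, smul_eq_mul]
      have hAfin : ∫⁻ x, A x ∂νq ≠ ∞ := by
        rw [hAeq]
        exact ENNReal.mul_ne_top (ENNReal.pow_ne_top hθtop) hLfin
      have hintA : Integrable (fun x => (A x).toReal) νq :=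
        integrable_toReal_of_lintegral_ne_top hAmeas.aemeasurable hAfin
      have hinner : ∀ x, ∫ y, f y ∂S n x = (A x).toReal := fun x =>
        integral_eq_lintegral_of_nonneg_ae (ae_of_all _ hf0) hf.aestronglyMeasurable
      set h : α → ℝ := fun x =>
        ((theta0 S).toReal)⁻¹ ^ n * (n : ℝ) ^ (-(jfun S x)) * ∫ y, f y ∂S n x with hhdef
      have haeh : h =ᵐ[νq] fun x => ((theta0 S).toReal)⁻¹ ^ n * (A x).toReal := by
        filter_upwards [hjae] with x hx
        simp only [hhdef, hx, neg_zero, Real.rpow_zero, mul_one, hinner x]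
      have hhint : Integrable h νq := ((hintA.const_mul _).congr haeh.symm)
      have hInth : ∫ x, h x ∂νq = ∫ x, f x ∂νq := by
        rw [integral_congr_ae haeh, integral_const_mul,
          integral_toReal hAmeas.aemeasurable (ae_lt_top hAmeas hAfin), hAeq,
          ENNReal.toReal_mul, ENNReal.toReal_pow, ← mul_assoc, ← mul_pow,
          inv_mul_cancel₀ hθR.ne', one_pow, one_mul, hLf]
      have habsle : |∫ x, f x ∂νq - ∫ x, g x ∂νq| ≤ ∫ x, a n * W x * c ∂νq := by
        rw [← hInth, ← integral_sub hhint hgint]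
        calc |∫ x, (h x - g x) ∂νq| ≤ ∫ x, |h x - g x| ∂νq := by
              simpa [Real.norm_eq_abs] using
                norm_integral_le_integral_norm (fun x => h x - g x) (μ := νq)
          _ ≤ ∫ x, a n * W x * c ∂νq := by
              refine integral_mono (hhint.sub hgint).abs
                ((hWint.const_mul (a n)).mul_const c) (fun x => ?_)
              exact hA.approx f hf c hc habsf n hn x
      refine le_trans habsle (le_of_eq ?_)
      rw [show (fun x => a n * W x * c) = fun x => (a n * W x) * c from rfl,
        integral_mul_const, integral_const_mul]
      ring
    have htendK : Tendsto (fun n => a n * ((∫ x, W x ∂νq) * c)) atTop (nhds 0) := by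
      simpa using hA.a_tendsto.mul_const ((∫ x, W x ∂νq) * c)
    have hle0 : |∫ x, f x ∂νq - ∫ x, g x ∂νq| ≤ 0 :=
      ge_of_tendsto htendK (eventually_atTop.mpr ⟨1, fun n hn => hstep n hn⟩)
    exact sub_eq_zero.mp (abs_nonpos_iff.mp hle0)
  -- conclusion 1
  have hcon1 : ∫ x, (∑' i, η i x) ∂νq = 1 := by
    have h1 := key (fun _ => 1) measurable_const (fun _ => zero_le_one) 1 zero_le_one
      (fun x => by simpa using hA.one_le_W x)
    have hl : ∫ x, (1 : ℝ) ∂νq = 1 := by simp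
    rw [hl] at h1
    refine Eq.trans ?_ h1.symm
    refine integral_congr_ae (ae_of_all _ fun x => ?_)
    refine tsum_congr fun i => ?_
    haveI := hA.nu_prob i
    simp
  refine ⟨hcon1, ?_⟩
  -- conclusion 2
  ext s hs
  set L : I → ℝ≥0∞ := fun i => ∫⁻ x, ENNReal.ofReal (η i x) ∂νq with hLdef
  have hLfin : ∀ i, L i ≠ ∞ := by
    intro i
    have hle : ∫⁻ x, ENNReal.ofReal (η i x) ∂νq
        ≤ ENNReal.ofReal C * ∫⁻ x, ENNReal.ofReal (W x) ∂νq := by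
      rw [← lintegral_const_mul _ hA.W_meas.ennreal_ofReal]
      refine lintegral_mono fun y => ?_
      rw [← ENNReal.ofReal_mul hC0]
      exact ENNReal.ofReal_le_ofReal (hηC i y)
    exact ne_top_of_le_ne_top (ENNReal.mul_ne_top ENNReal.ofReal_ne_top hνW) hle
  have hLof : ∀ i, ENNReal.ofReal (∫ x, η i x ∂νq) = L i := by
    intro i
    rw [integral_eq_lintegral_of_nonneg_ae (ae_of_all _ (hA.eta_nonneg i))
      (hA.eta_meas i).aestronglyMeasurable, ENNReal.ofReal_toReal (hLfin i)]
  have hsumL : (∑' i, L i) ≠ ∞ := by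
    rw [hLdef, ← lintegral_tsum fun i => (hA.eta_meas i).ennreal_ofReal.aemeasurable]
    have hle : ∫⁻ x, ∑' i, ENNReal.ofReal (η i x) ∂νq
        ≤ ENNReal.ofReal C * ∫⁻ x, ENNReal.ofReal (W x) ∂νq := by
      rw [← lintegral_const_mul _ hA.W_meas.ennreal_ofReal]
      refine lintegral_mono fun x => ?_
      have hsx : Summable fun i => η i x :=
        Summable.of_nonneg_of_le (fun i => hA.eta_nonneg i x) (fun i => hηWle i x)
          (hA.summable_etanu x)
      rw [← ENNReal.ofReal_tsum_of_nonneg (fun i => hA.eta_nonneg i x) hsx,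
        ← ENNReal.ofReal_mul hC0]
      refine ENNReal.ofReal_le_ofReal ?_
      calc ∑' i, η i x ≤ ∑' i, η i x * Wi i :=
            Summable.tsum_le_tsum (fun i => hηWle i x) hsx (hA.summable_etanu x)
        _ ≤ C * W x := hC x
    exact ne_top_of_le_ne_top (ENNReal.mul_ne_top ENNReal.ofReal_ne_top hνW) hle
  have hindW : ∀ x, s.indicator (fun _ => (1 : ℝ)) x ≤ 1 * W x := by
    intro x
    rw [one_mul]
    by_cases hx : x ∈ s
    · simpa [hx] using hA.one_le_W x
    · simp only [Set.indicator_of_notMem hx]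
      exact hW0 x
  have hid := key (s.indicator fun _ => 1) (measurable_const.indicator hs)
    (fun x => Set.indicator_nonneg (fun _ _ => zero_le_one) x) 1 zero_le_one hindW
  have hindν : ∫ x, s.indicator (fun _ => (1 : ℝ)) x ∂νq = (νq s).toReal := by
    rw [integral_indicator_const (1 : ℝ) hs]; simp [Measure.real]
  have hindνi : ∀ i, ∫ y, s.indicator (fun _ => (1 : ℝ)) y ∂ν i = ((ν i) s).toReal := by
    intro i; rw [integral_indicator_const (1 : ℝ) hs]; simp [Measure.real]
  rw [hindν] at hid
  have hRHSfin : (∑' i, L i * ν i s) ≠ ∞ := by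
    refine ne_top_of_le_ne_top hsumL (ENNReal.summable.tsum_le_tsum (fun i => ?_)
      ENNReal.summable)
    haveI := hA.nu_prob i
    calc L i * ν i s ≤ L i * 1 := mul_le_mul_right prob_le_one _
      _ = L i := mul_one _
  have hsum2 : ∀ x, Summable fun i => η i x * ((ν i) s).toReal := by
    intro x
    refine Summable.of_nonneg_of_le
      (fun i => mul_nonneg (hA.eta_nonneg i x) ENNReal.toReal_nonneg) (fun i => ?_)
      (hA.summable_etanu x)
    haveI := hA.nu_prob i
    refine mul_le_mul_of_nonneg_left ?_ (hA.eta_nonneg i x)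
    calc ((ν i) s).toReal ≤ 1 := by
          simpa using ENNReal.toReal_mono ENNReal.one_ne_top prob_le_one
      _ ≤ Wi i := hWi1 i
  have hG0 : ∀ x, (0 : ℝ) ≤ ∑' i, η i x * ((ν i) s).toReal := fun x =>
    tsum_nonneg fun i => mul_nonneg (hA.eta_nonneg i x) ENNReal.toReal_nonneg
  have hGmeas : Measurable fun x => ∑' i, η i x * ((ν i) s).toReal := by
    have hE : Measurable fun x => ∑' i, ENNReal.ofReal (η i x * ((ν i) s).toReal) :=
      Measurable.ennreal_tsum fun i =>
        ((hA.eta_meas i).mul_const (((ν i) s).toReal)).ennreal_ofReal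
    have hge : (fun x => ∑' i, η i x * ((ν i) s).toReal)
        = fun x => (∑' i, ENNReal.ofReal (η i x * ((ν i) s).toReal)).toReal := by
      funext x
      rw [← ENNReal.ofReal_tsum_of_nonneg
        (fun i => mul_nonneg (hA.eta_nonneg i x) ENNReal.toReal_nonneg) (hsum2 x),
        ENNReal.toReal_ofReal (hG0 x)]
    rw [hge]
    exact hE.ennreal_toReal
  have hmain : (νq s).toReal = (∑' i, L i * ν i s).toReal := by
    rw [hid]
    have hr : ∀ x, (∑' i, η i x * ∫ y, s.indicator (fun _ => (1 : ℝ)) y ∂ν i)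
        = ∑' i, η i x * ((ν i) s).toReal := fun x => tsum_congr fun i => by rw [hindνi i]
    rw [integral_congr_ae (ae_of_all _ hr),
      integral_eq_lintegral_of_nonneg_ae (ae_of_all _ hG0) hGmeas.aestronglyMeasurable]
    congr 1
    calc ∫⁻ x, ENNReal.ofReal (∑' i, η i x * ((ν i) s).toReal) ∂νq
        = ∫⁻ x, ∑' i, ENNReal.ofReal (η i x * ((ν i) s).toReal) ∂νq :=
          lintegral_congr fun x => ENNReal.ofReal_tsum_of_nonneg
            (fun i => mul_nonneg (hA.eta_nonneg i x) ENNReal.toReal_nonneg) (hsum2 x)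
      _ = ∑' i, ∫⁻ x, ENNReal.ofReal (η i x * ((ν i) s).toReal) ∂νq :=
          lintegral_tsum fun i =>
            ((hA.eta_meas i).mul_const (((ν i) s).toReal)).ennreal_ofReal.aemeasurable
      _ = ∑' i, L i * ν i s := by
          refine tsum_congr fun i => ?_
          haveI := hA.nu_prob i
          have hm : ∀ x, ENNReal.ofReal (η i x * ((ν i) s).toReal)
              = ENNReal.ofReal (η i x) * ENNReal.ofReal (((ν i) s).toReal) := fun x =>
            ENNReal.ofReal_mul (hA.eta_nonneg i x)
          simp_rw [hm]
          rw [lintegral_mul_const _ (hA.eta_meas i).ennreal_ofReal,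
            ENNReal.ofReal_toReal (measure_ne_top _ s)]
  rw [Measure.sum_apply _ hs]
  simp_rw [Measure.smul_apply, smul_eq_mul, hLof]
  exact (ENNReal.toReal_eq_toReal_iff' (measure_ne_top νq s) hRHSfin).mp hmain
end
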